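/- There exists an increasing homeomorphism ψ : [-1,1] → [-1,1] with ψ(-1) = -1 and ψ(1) = 1 such that, with λ = (1+√5)/2: (i) ψ(T̃(ψ⁻¹(x))) = λx + (λ-1) for all x ∈ ψ([-1,-1/3)); (ii) ψ(S̃(ψ⁻¹(x))) = λx + 1 for all x ∈ ψ([-1/2,0)); (iii) ψ(S̃(ψ⁻¹(x))) = λx - 1 for all x ∈ ψ((0,1/2)); (iv) ψ(T̃⁻¹(ψ⁻¹(x))) = λx + (1-λ) for all x ∈ ψ([1/3,1)). -/

import Mathlib

/-- The compactified translation `T̃ = k ∘ T ∘ k⁻¹`, `T(x) = x + 1`, on `[-1,1)`. -/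
noncomputable def Ttilde (x : ℝ) : ℝ :=
  if x ≤ -1/2 then -2 - 1/x
  else if x ≤ 0 then (1 + 2*x) / (2 + 3*x)
  else 1 / (2 - x)

/-- The compactified inversion `S̃ = k ∘ S ∘ k⁻¹`, `S(x) = -1/x`, on `[-1,1)`. -/
noncomputable def Stilde (x : ℝ) : ℝ :=
  if x < 0 then x + 1 else if x = 0 then -1 else x - 1

/-- The compactified inverse translation `T̃⁻¹ = k ∘ T⁻¹ ∘ k⁻¹` on `[-1,1)`. -/
noncomputable def Tinvtilde (x : ℝ) : ℝ :=
  if x ≤ 0 then -1 / (2 + x)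
  else if x ≤ 1/2 then (1 - 2*x) / (3*x - 2)
  else 2 - 1/x

open Set

/-- The golden ratio. -/
noncomputable def gl : ℝ := (1 + Real.sqrt 5) / 2

lemma sqrt5_sq : Real.sqrt 5 ^ 2 = 5 := Real.sq_sqrt (by norm_num)

lemma sqrt5_gt : (2 : ℝ) < Real.sqrt 5 := by
  nlinarith [sqrt5_sq, Real.sqrt_nonneg 5]

lemma sqrt5_lt : Real.sqrt 5 < 9/4 := by
  nlinarith [sqrt5_sq, Real.sqrt_nonneg 5]

lemma gl_sq : gl ^ 2 = gl + 1 := by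
  unfold gl; linear_combination (1/4) * sqrt5_sq

lemma gl_gt : (3/2 : ℝ) < gl := by unfold gl; linarith [sqrt5_gt]

lemma gl_lt : gl < 13/8 := by unfold gl; linarith [sqrt5_lt]

lemma gl_pos : (0:ℝ) < gl - 1 := by linarith [gl_gt]

lemma gl_ne : gl ≠ 0 := by have := gl_gt; intro h; rw [h] at this; norm_num at this

section helpers

lemma TmapA_mem {y : ℝ} (h1 : -1 ≤ y) (h2 : y ≤ -1/2) : -1 ≤ -2 - 1/y ∧ -2 - 1/y ≤ 0 := by
  have hy : y < 0 := by linarith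
  have ha : 1/y ≤ -1 := by rw [div_le_iff_of_neg hy]; linarith
  have hb : -2 ≤ 1/y := by rw [le_div_iff_of_neg hy]; linarith
  exact ⟨by linarith, by linarith⟩

lemma TmapD_mem {y : ℝ} (h1 : 1/2 ≤ y) (h2 : y ≤ 1) : 0 ≤ 2 - 1/y ∧ 2 - 1/y ≤ 1 := by
  have hy : (0:ℝ) < y := by linarith
  have ha : 1/y ≤ 2 := by rw [div_le_iff₀ hy]; linarith
  have hb : 1 ≤ 1/y := by rw [le_div_iff₀ hy]; linarith
  exact ⟨by linarith, by linarith⟩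

lemma negrecip_mono {y z : ℝ} (hy : y < 0) (hz : z < 0) (h : y ≤ z) :
    -2 - 1/y ≤ -2 - 1/z := by
  have hyz : 0 < y * z := mul_pos_of_neg_of_neg hy hz
  have hy0 : y ≠ 0 := ne_of_lt hy
  have hz0 : z ≠ 0 := ne_of_lt hz
  have key : 1/y - 1/z = (z - y) * (1/(y*z)) := by
    field_simp
  have h2 : 0 ≤ (z - y) * (1/(y*z)) := mul_nonneg (by linarith) (by positivity)
  linarith

end helpers

section construction

abbrev BCF := BoundedContinuousFunction ℝ ℝ

noncomputable def brA (f : ℝ → ℝ) (x : ℝ) : ℝ :=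
  (gl - 1) * f (-2 - 1 / min (max x (-1)) (-1/2)) - (2 - gl)
noncomputable def brB (f : ℝ → ℝ) (x : ℝ) : ℝ :=
  (gl - 1) * f (min (max x (-1/2)) 0 + 1) - (gl - 1)
noncomputable def brC (f : ℝ → ℝ) (x : ℝ) : ℝ :=
  (gl - 1) * f (min (max x 0) (1/2) - 1) + (gl - 1)
noncomputable def brD (f : ℝ → ℝ) (x : ℝ) : ℝ :=
  (gl - 1) * f (2 - 1 / min (max x (1/2)) 1) + (2 - gl)

noncomputable def Kraw (f : ℝ → ℝ) (x : ℝ) : ℝ :=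
  if x ≤ -1/2 then brA f x else if x ≤ 0 then brB f x else if x ≤ 1/2 then brC f x else brD f x

-- clamp membership lemmas
lemma clampA_mem (x : ℝ) : -1 ≤ min (max x (-1)) (-1/2) ∧ min (max x (-1)) (-1/2) ≤ -1/2 :=
  ⟨le_min (le_max_right _ _) (by norm_num), min_le_right _ _⟩

lemma clampB_mem (x : ℝ) : -1/2 ≤ min (max x (-1/2)) 0 ∧ min (max x (-1/2)) 0 ≤ 0 :=
  ⟨le_min (le_max_right _ _) (by norm_num), min_le_right _ _⟩

lemma clampC_mem (x : ℝ) : 0 ≤ min (max x 0) (1/2) ∧ min (max x 0) (1/2) ≤ 1/2 :=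
  ⟨le_min (le_max_right _ _) (by norm_num), min_le_right _ _⟩

lemma clampD_mem (x : ℝ) : 1/2 ≤ min (max x (1/2)) 1 ∧ min (max x (1/2)) 1 ≤ 1 :=
  ⟨le_min (le_max_right _ _) (by norm_num), min_le_right _ _⟩

-- arguments in brX lie inside Icc (-1) 1
lemma argA_mem (x : ℝ) : (-2 - 1 / min (max x (-1)) (-1/2)) ∈ Icc (-1:ℝ) 1 := by
  have h := TmapA_mem (clampA_mem x).1 (clampA_mem x).2
  exact ⟨h.1, by linarith [h.2]⟩

lemma argB_mem (x : ℝ) : (min (max x (-1/2)) 0 + 1) ∈ Icc (-1:ℝ) 1 := by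
  have h := clampB_mem x
  exact ⟨by linarith [h.1], by linarith [h.2]⟩

lemma argC_mem (x : ℝ) : (min (max x 0) (1/2) - 1) ∈ Icc (-1:ℝ) 1 := by
  have h := clampC_mem x
  exact ⟨by linarith [h.1], by linarith [h.2]⟩

lemma argD_mem (x : ℝ) : (2 - 1 / min (max x (1/2)) 1) ∈ Icc (-1:ℝ) 1 := by
  have h := TmapD_mem (clampD_mem x).1 (clampD_mem x).2
  exact ⟨by linarith [h.1], h.2⟩

-- monotonicity of branches
lemma brA_mono (f : BCF) (hm : MonotoneOn ⇑f (Icc (-1) 1)) : Monotone (brA ⇑f) := by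
  intro u v huv
  unfold brA
  have hcc : min (max u (-1)) (-1/2) ≤ min (max v (-1)) (-1/2) :=
    min_le_min (max_le_max huv le_rfl) le_rfl
  have harg := negrecip_mono (by linarith [(clampA_mem u).2] : min (max u (-1)) (-1/2) < 0)
    (by linarith [(clampA_mem v).2] : min (max v (-1)) (-1/2) < 0) hcc
  have := hm (argA_mem u) (argA_mem v) harg
  nlinarith [gl_pos]

lemma brB_mono (f : BCF) (hm : MonotoneOn ⇑f (Icc (-1) 1)) : Monotone (brB ⇑f) := by
  intro u v huv
  unfold brB
  have hcc : min (max u (-1/2)) 0 + 1 ≤ min (max v (-1/2)) 0 + 1 := by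
    have := min_le_min (max_le_max huv (le_refl (-1/2:ℝ))) (le_refl (0:ℝ))
    linarith
  have := hm (argB_mem u) (argB_mem v) hcc
  nlinarith [gl_pos]

lemma brC_mono (f : BCF) (hm : MonotoneOn ⇑f (Icc (-1) 1)) : Monotone (brC ⇑f) := by
  intro u v huv
  unfold brC
  have hcc : min (max u 0) (1/2) - 1 ≤ min (max v 0) (1/2) - 1 := by
    have := min_le_min (max_le_max huv (le_refl (0:ℝ))) (le_refl (1/2:ℝ))
    linarith
  have := hm (argC_mem u) (argC_mem v) hcc
  nlinarith [gl_pos]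

lemma brD_mono (f : BCF) (hm : MonotoneOn ⇑f (Icc (-1) 1)) : Monotone (brD ⇑f) := by
  intro u v huv
  unfold brD
  have hcc : min (max u (1/2)) 1 ≤ min (max v (1/2)) 1 :=
    min_le_min (max_le_max huv le_rfl) le_rfl
  have harg : 2 - 1 / min (max u (1/2)) 1 ≤ 2 - 1 / min (max v (1/2)) 1 := by
    have := one_div_le_one_div_of_le (by linarith [(clampD_mem u).1] : (0:ℝ) < min (max u (1/2)) 1) hcc
    linarith
  have := hm (argD_mem u) (argD_mem v) harg
  nlinarith [gl_pos]

end construction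

section construction2

-- boundary matching equalities
lemma eAB (f : ℝ → ℝ) (h3 : f 0 = 0) (h4 : f (1/2) = 2 - gl) :
    brA f (-1/2) = brB f (-1/2) := by
  unfold brA brB
  have a1 : min (max (-1/2:ℝ) (-1)) (-1/2) = -1/2 := by norm_num [max_def, min_def]
  have a2 : min (max (-1/2:ℝ) (-1/2)) 0 = -1/2 := by norm_num [max_def, min_def]
  rw [a1, a2, show (-2:ℝ) - 1/(-1/2:ℝ) = 0 by norm_num,
    show (-1:ℝ)/2 + 1 = 1/2 by norm_num, h3, h4]
  linear_combination gl_sq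

lemma eBC (f : ℝ → ℝ) (h1 : f (-1) = -1) (h5 : f 1 = 1) :
    brB f 0 = brC f 0 := by
  unfold brB brC
  have a1 : min (max (0:ℝ) (-1/2)) 0 = 0 := by norm_num [max_def, min_def]
  have a2 : min (max (0:ℝ) 0) (1/2) = 0 := by norm_num [max_def, min_def]
  rw [a1, a2, show (0:ℝ) + 1 = 1 by norm_num, show (0:ℝ) - 1 = -1 by norm_num, h1, h5]
  ring

lemma eCD (f : ℝ → ℝ) (h2 : f (-1/2) = gl - 2) (h3 : f 0 = 0) :
    brC f (1/2) = brD f (1/2) := by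
  unfold brC brD
  have a1 : min (max (1/2:ℝ) 0) (1/2) = 1/2 := by norm_num [max_def, min_def]
  have a2 : min (max (1/2:ℝ) (1/2)) 1 = 1/2 := by norm_num [max_def, min_def]
  rw [a1, a2, show (1:ℝ)/2 - 1 = -1/2 by norm_num,
    show (2:ℝ) - 1/(1/2:ℝ) = 0 by norm_num, h2, h3]
  linear_combination gl_sq

end construction2

section construction3

-- step lemmas (crossing branch boundaries)
lemma stepAB (f : BCF) (h3 : ⇑f 0 = 0) (h4 : ⇑f (1/2) = 2 - gl)
    (hm : MonotoneOn ⇑f (Icc (-1) 1)) :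
    ∀ w, -1/2 ≤ w → brA ⇑f w ≤ brB ⇑f w := by
  intro w hw
  have e1 : brA ⇑f w = brA ⇑f (-1/2) := by
    unfold brA
    rw [show min (max w (-1)) (-1/2) = -1/2 from
        min_eq_right (le_trans hw (le_max_left _ _)),
      show min (max (-1/2:ℝ) (-1)) (-1/2) = -1/2 by norm_num [max_def, min_def]]
  rw [e1, eAB ⇑f h3 h4]
  exact brB_mono f hm hw

lemma stepBC (f : BCF) (h1 : ⇑f (-1) = -1) (h5 : ⇑f 1 = 1)
    (hm : MonotoneOn ⇑f (Icc (-1) 1)) :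
    ∀ w, 0 ≤ w → brB ⇑f w ≤ brC ⇑f w := by
  intro w hw
  have e1 : brB ⇑f w = brB ⇑f 0 := by
    unfold brB
    rw [show min (max w (-1/2)) 0 = 0 from
        min_eq_right (le_trans hw (le_max_left _ _)),
      show min (max (0:ℝ) (-1/2)) 0 = 0 by norm_num [max_def, min_def]]
  rw [e1, eBC ⇑f h1 h5]
  exact brC_mono f hm hw

lemma stepCD (f : BCF) (h2 : ⇑f (-1/2) = gl - 2) (h3 : ⇑f 0 = 0)
    (hm : MonotoneOn ⇑f (Icc (-1) 1)) :
    ∀ w, 1/2 ≤ w → brC ⇑f w ≤ brD ⇑f w := by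
  intro w hw
  have e1 : brC ⇑f w = brC ⇑f (1/2) := by
    unfold brC
    rw [show min (max w 0) (1/2) = 1/2 from
        min_eq_right (le_trans hw (le_max_left _ _)),
      show min (max (1/2:ℝ) 0) (1/2) = 1/2 by norm_num [max_def, min_def]]
  rw [e1, eCD ⇑f h2 h3]
  exact brD_mono f hm hw

noncomputable def Xset : Set BCF :=
  {f | ⇑f (-1) = -1 ∧ ⇑f (-1/2) = gl - 2 ∧ ⇑f 0 = 0 ∧ ⇑f (1/2) = 2 - gl ∧ ⇑f 1 = 1 ∧
    MonotoneOn ⇑f (Icc (-1) 1)}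

lemma Kraw_mono (f : BCF) (hf : f ∈ Xset) : Monotone (Kraw ⇑f) := by
  obtain ⟨h1, h2, h3, h4, h5, hm⟩ := hf
  have mA := brA_mono f hm
  have mB := brB_mono f hm
  have mC := brC_mono f hm
  have mD := brD_mono f hm
  have sAB := stepAB f h3 h4 hm
  have sBC := stepBC f h1 h5 hm
  have sCD := stepCD f h2 h3 hm
  intro u v huv
  unfold Kraw
  rcases le_or_gt u (-1/2) with hu1 | hu1
  · rw [if_pos hu1]
    rcases le_or_gt v (-1/2) with hv1 | hv1
    · rw [if_pos hv1]; exact mA huv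
    · rw [if_neg (not_le.2 hv1)]
      rcases le_or_gt v 0 with hv2 | hv2
      · rw [if_pos hv2]; exact le_trans (mA huv) (sAB v hv1.le)
      · rw [if_neg (not_le.2 hv2)]
        rcases le_or_gt v (1/2) with hv3 | hv3
        · rw [if_pos hv3]; exact le_trans (mA huv) (le_trans (sAB v hv1.le) (sBC v hv2.le))
        · rw [if_neg (not_le.2 hv3)]
          exact le_trans (mA huv) (le_trans (sAB v hv1.le)
            (le_trans (sBC v hv2.le) (sCD v hv3.le)))
  · rw [if_neg (not_le.2 hu1), if_neg (not_le.2 (lt_of_lt_of_le hu1 huv))]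
    rcases le_or_gt u 0 with hu2 | hu2
    · rw [if_pos hu2]
      rcases le_or_gt v 0 with hv2 | hv2
      · rw [if_pos hv2]; exact mB huv
      · rw [if_neg (not_le.2 hv2)]
        rcases le_or_gt v (1/2) with hv3 | hv3
        · rw [if_pos hv3]; exact le_trans (mB huv) (le_trans (sBC v hv2.le) (le_refl _))
        · rw [if_neg (not_le.2 hv3)]
          exact le_trans (mB huv) (le_trans (sBC v hv2.le) (sCD v hv3.le))
    · rw [if_neg (not_le.2 hu2), if_neg (not_le.2 (lt_of_lt_of_le hu2 huv))]
      rcases le_or_gt u (1/2) with hu3 | hu3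
      · rw [if_pos hu3]
        rcases le_or_gt v (1/2) with hv3 | hv3
        · rw [if_pos hv3]; exact mC huv
        · rw [if_neg (not_le.2 hv3)]
          exact le_trans (mC huv) (sCD v hv3.le)
      · rw [if_neg (not_le.2 hu3), if_neg (not_le.2 (lt_of_lt_of_le hu3 huv))]
        exact mD huv

end construction3

section construction4

lemma clampA_cont : Continuous fun x : ℝ => -2 - 1 / min (max x (-1)) (-1/2) := by
  have h : Continuous fun x : ℝ => min (max x (-1)) (-1/2) :=
    (continuous_id.max continuous_const).min continuous_const
  have hne : ∀ x : ℝ, min (max x (-1)) (-1/2) ≠ 0 := fun x =>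
    ne_of_lt (lt_of_le_of_lt (min_le_right _ _) (by norm_num))
  exact continuous_const.sub (continuous_const.div h hne)

lemma clampD_cont : Continuous fun x : ℝ => 2 - 1 / min (max x (1/2)) 1 := by
  have h : Continuous fun x : ℝ => min (max x (1/2)) 1 :=
    (continuous_id.max continuous_const).min continuous_const
  have hne : ∀ x : ℝ, min (max x (1/2)) 1 ≠ 0 := fun x =>
    ne_of_gt (lt_of_lt_of_le (by norm_num) (le_min (le_max_right _ _) (by norm_num)))
  exact continuous_const.sub (continuous_const.div h hne)

lemma brA_cont (f : BCF) : Continuous (brA ⇑f) :=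
  (continuous_const.mul (f.continuous.comp clampA_cont)).sub continuous_const

lemma brB_cont (f : BCF) : Continuous (brB ⇑f) :=
  (continuous_const.mul (f.continuous.comp
    (((continuous_id.max continuous_const).min continuous_const).add continuous_const))).sub
    continuous_const

lemma brC_cont (f : BCF) : Continuous (brC ⇑f) :=
  (continuous_const.mul (f.continuous.comp
    (((continuous_id.max continuous_const).min continuous_const).sub continuous_const))).add
    continuous_const

lemma brD_cont (f : BCF) : Continuous (brD ⇑f) :=
  (continuous_const.mul (f.continuous.comp clampD_cont)).add continuous_const

lemma Kraw_cont (f : BCF) (hf : f ∈ Xset) : Continuous (Kraw ⇑f) := by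
  obtain ⟨h1, h2, h3, h4, h5, hm⟩ := hf
  unfold Kraw
  apply Continuous.if_le _ _ continuous_id continuous_const
  · -- boundary at -1/2
    intro a ha
    have ha' : a = -1/2 := ha
    rw [ha', if_pos (by norm_num : (-1/2:ℝ) ≤ 0)]
    exact eAB ⇑f h3 h4
  · exact brA_cont f
  · apply Continuous.if_le _ _ continuous_id continuous_const
    · intro a ha
      have ha' : a = 0 := ha
      rw [ha', if_pos (by norm_num : (0:ℝ) ≤ 1/2)]
      exact eBC ⇑f h1 h5
    · exact brB_cont f
    · apply Continuous.if_le _ _ continuous_id continuous_const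
      · intro a ha
        have ha' : a = 1/2 := ha
        rw [ha']
        exact eCD ⇑f h2 h3
      · exact brC_cont f
      · exact brD_cont f

lemma Kraw_bound (f : BCF) (x : ℝ) : |Kraw ⇑f x| ≤ (gl - 1) * ‖f‖ + 2 := by
  have key : ∀ (t c : ℝ), |c| ≤ 2 → |(gl - 1) * ⇑f t + c| ≤ (gl - 1) * ‖f‖ + 2 := by
    intro t c hc
    have hb : |⇑f t| ≤ ‖f‖ := by
      have := f.norm_coe_le_norm t
      rwa [Real.norm_eq_abs] at this
    calc |(gl - 1) * ⇑f t + c| ≤ |(gl - 1) * ⇑f t| + |c| := abs_add_le _ _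
      _ = (gl - 1) * |⇑f t| + |c| := by rw [abs_mul, abs_of_pos gl_pos]
      _ ≤ (gl - 1) * ‖f‖ + 2 :=
        add_le_add (mul_le_mul_of_nonneg_left hb (le_of_lt gl_pos)) hc
  have habs : |(2:ℝ) - gl| ≤ 2 := by
    rw [abs_le]; constructor <;> [linarith [gl_lt]; linarith [gl_gt]]
  have habs2 : |-(2 - gl)| ≤ 2 := by rwa [abs_neg]
  have habs3 : |gl - (1:ℝ)| ≤ 2 := by
    rw [abs_le]; constructor <;> [linarith [gl_gt]; linarith [gl_lt]]
  have habs4 : |-(gl - (1:ℝ))| ≤ 2 := by rwa [abs_neg]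
  unfold Kraw brA brB brC brD
  split_ifs
  · simpa [sub_eq_add_neg] using key _ (-(2 - gl)) habs2
  · simpa [sub_eq_add_neg] using key _ (-(gl - 1)) habs4
  · exact key _ (gl - 1) habs3
  · exact key _ (2 - gl) habs

noncomputable def Kfun (f : BCF) (hf : f ∈ Xset) : BCF :=
  BoundedContinuousFunction.ofNormedAddCommGroup (Kraw ⇑f) (Kraw_cont f hf)
    ((gl - 1) * ‖f‖ + 2) (fun x => by rw [Real.norm_eq_abs]; exact Kraw_bound f x)

@[simp] lemma Kfun_coe (f : BCF) (hf : f ∈ Xset) : ⇑(Kfun f hf) = Kraw ⇑f := rfl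

end construction4

section construction5

lemma Kraw_val1 (f : ℝ → ℝ) (h1 : f (-1) = -1) : Kraw f (-1) = -1 := by
  unfold Kraw
  rw [if_pos (by norm_num : (-1:ℝ) ≤ -1/2)]
  unfold brA
  rw [show (-2 - 1 / min (max (-1:ℝ) (-1)) (-1/2)) = -1 by norm_num [max_def, min_def], h1]
  ring

lemma Kraw_val2 (f : ℝ → ℝ) (h3 : f 0 = 0) : Kraw f (-1/2) = gl - 2 := by
  unfold Kraw
  rw [if_pos (by norm_num : (-1/2:ℝ) ≤ -1/2)]
  unfold brA
  rw [show (-2 - 1 / min (max (-1/2:ℝ) (-1)) (-1/2)) = 0 by norm_num [max_def, min_def], h3]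
  ring

lemma Kraw_val3 (f : ℝ → ℝ) (h5 : f 1 = 1) : Kraw f 0 = 0 := by
  unfold Kraw
  rw [if_neg (by norm_num : ¬ (0:ℝ) ≤ -1/2), if_pos (le_refl (0:ℝ))]
  unfold brB
  rw [show (min (max (0:ℝ) (-1/2)) 0 + 1) = 1 by norm_num [max_def, min_def], h5]
  ring

lemma Kraw_val4 (f : ℝ → ℝ) (h2 : f (-1/2) = gl - 2) : Kraw f (1/2) = 2 - gl := by
  unfold Kraw
  rw [if_neg (by norm_num : ¬ (1/2:ℝ) ≤ -1/2), if_neg (by norm_num : ¬ (1/2:ℝ) ≤ 0),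
    if_pos (le_refl (1/2:ℝ))]
  unfold brC
  rw [show (min (max (1/2:ℝ) 0) (1/2) - 1) = -1/2 by norm_num [max_def, min_def], h2]
  linear_combination gl_sq

lemma Kraw_val5 (f : ℝ → ℝ) (h5 : f 1 = 1) : Kraw f 1 = 1 := by
  unfold Kraw
  rw [if_neg (by norm_num : ¬ (1:ℝ) ≤ -1/2), if_neg (by norm_num : ¬ (1:ℝ) ≤ 0),
    if_neg (by norm_num : ¬ (1:ℝ) ≤ 1/2)]
  unfold brD
  rw [show (2 - 1 / min (max (1:ℝ) (1/2)) 1) = 1 by norm_num [max_def, min_def], h5]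
  ring

lemma Kfun_mem (f : BCF) (hf : f ∈ Xset) : Kfun f hf ∈ Xset := by
  obtain ⟨h1, h2, h3, h4, h5, hm⟩ := hf
  refine ⟨?_, ?_, ?_, ?_, ?_, ?_⟩
  · show Kraw ⇑f (-1) = -1; exact Kraw_val1 ⇑f h1
  · show Kraw ⇑f (-1/2) = gl - 2; exact Kraw_val2 ⇑f h3
  · show Kraw ⇑f 0 = 0; exact Kraw_val3 ⇑f h5
  · show Kraw ⇑f (1/2) = 2 - gl; exact Kraw_val4 ⇑f h2
  · show Kraw ⇑f 1 = 1; exact Kraw_val5 ⇑f h5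
  · exact (Kraw_mono f ⟨h1, h2, h3, h4, h5, hm⟩).monotoneOn _

lemma isClosed_Xset : IsClosed Xset := by
  have hc : ∀ a : ℝ, Continuous fun f : BCF => f a := fun a =>
    continuous_eval_const a
  have hmono : IsClosed {f : BCF | MonotoneOn ⇑f (Icc (-1:ℝ) 1)} := by
    have : {f : BCF | MonotoneOn ⇑f (Icc (-1:ℝ) 1)} =
        ⋂ (a : ℝ), ⋂ (b : ℝ),
          {f : BCF | a ∈ Icc (-1:ℝ) 1 → b ∈ Icc (-1:ℝ) 1 → a ≤ b → f a ≤ f b} := by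
      ext f
      simp only [Set.mem_setOf_eq, Set.mem_iInter]
      exact ⟨fun h a b ha hb hab => h ha hb hab, fun h a ha b hb hab => h a b ha hb hab⟩
    rw [this]
    refine isClosed_iInter fun a => isClosed_iInter fun b => ?_
    by_cases h : a ∈ Icc (-1:ℝ) 1 ∧ b ∈ Icc (-1:ℝ) 1 ∧ a ≤ b
    · obtain ⟨ha, hb, hab⟩ := h
      have e : {f : BCF | a ∈ Icc (-1:ℝ) 1 → b ∈ Icc (-1:ℝ) 1 → a ≤ b → f a ≤ f b} =
          {f : BCF | f a ≤ f b} := by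
        ext f; simp [ha, hb, hab]
      rw [e]; exact isClosed_le (hc a) (hc b)
    · have e : {f : BCF | a ∈ Icc (-1:ℝ) 1 → b ∈ Icc (-1:ℝ) 1 → a ≤ b → f a ≤ f b} =
          Set.univ := by
        ext f
        simp only [Set.mem_setOf_eq, Set.mem_univ, iff_true]
        intro ha hb hab
        exact absurd ⟨ha, hb, hab⟩ h
      rw [e]; exact isClosed_univ
  exact (isClosed_eq (hc _) continuous_const).inter
    ((isClosed_eq (hc _) continuous_const).inter
      ((isClosed_eq (hc _) continuous_const).inter
        ((isClosed_eq (hc _) continuous_const).inter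
          ((isClosed_eq (hc _) continuous_const).inter hmono))))

end construction5

section construction6

noncomputable def aa : ℝ := (15 - 8*gl)/3
noncomputable def bb : ℝ := 1 - aa

lemma aa_nonneg : 0 ≤ aa := by unfold aa; linarith [gl_lt]
lemma bb_nonneg : 0 ≤ bb := by unfold bb aa; linarith [gl_gt]

lemma cube_mono {s t : ℝ} (h : s ≤ t) : s^3 ≤ t^3 := by
  nlinarith [sq_nonneg (s + t), sq_nonneg (s - t), sq_nonneg s, sq_nonneg t]

noncomputable def f0fun (x : ℝ) : ℝ := aa * min (max x (-1)) 1 + bb * (min (max x (-1)) 1)^3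

lemma f0_cont : Continuous f0fun := by
  have h : Continuous fun x : ℝ => min (max x (-1)) 1 :=
    (continuous_id.max continuous_const).min continuous_const
  exact (continuous_const.mul h).add (continuous_const.mul (h.pow 3))

lemma f0_bound (x : ℝ) : ‖f0fun x‖ ≤ 1 := by
  rw [Real.norm_eq_abs]
  have hclamp : |min (max x (-1)) 1| ≤ 1 := by
    rw [abs_le]
    exact ⟨le_min (le_max_right _ _) (by norm_num), min_le_right _ _⟩
  have h3 : |min (max x (-1)) 1|^3 ≤ 1 := by
    nlinarith [abs_nonneg (min (max x (-1)) 1), sq_nonneg (|min (max x (-1)) 1|)]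
  have hab : aa + bb = 1 := by unfold bb; ring
  calc |f0fun x| ≤ aa * |min (max x (-1)) 1| + bb * |min (max x (-1)) 1|^3 := by
        unfold f0fun
        refine (abs_add_le _ _).trans ?_
        rw [abs_mul, abs_mul, abs_of_nonneg aa_nonneg, abs_of_nonneg bb_nonneg, abs_pow]
    _ ≤ aa * 1 + bb * 1 :=
        add_le_add (mul_le_mul_of_nonneg_left hclamp aa_nonneg)
          (mul_le_mul_of_nonneg_left h3 bb_nonneg)
    _ = 1 := by rw [mul_one, mul_one, hab]

noncomputable def f0 : BCF :=
  BoundedContinuousFunction.ofNormedAddCommGroup f0fun f0_cont 1 f0_bound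

lemma f0_mem : f0 ∈ Xset := by
  have hco : ⇑f0 = f0fun := rfl
  refine ⟨?_, ?_, ?_, ?_, ?_, ?_⟩
  · rw [hco]; unfold f0fun
    rw [show min (max (-1:ℝ) (-1)) 1 = -1 by norm_num [max_def, min_def]]
    unfold bb; ring
  · rw [hco]; unfold f0fun
    rw [show min (max (-1/2:ℝ) (-1)) 1 = -1/2 by norm_num [max_def, min_def]]
    unfold bb aa; ring
  · rw [hco]; unfold f0fun
    rw [show min (max (0:ℝ) (-1)) 1 = 0 by norm_num [max_def, min_def]]
    ring
  · rw [hco]; unfold f0fun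
    rw [show min (max (1/2:ℝ) (-1)) 1 = 1/2 by norm_num [max_def, min_def]]
    unfold bb aa; ring
  · rw [hco]; unfold f0fun
    rw [show min (max (1:ℝ) (-1)) 1 = 1 by norm_num [max_def, min_def]]
    unfold bb; ring
  · rw [hco]
    have : Monotone f0fun := by
      intro u v huv
      unfold f0fun
      have hcc : min (max u (-1)) 1 ≤ min (max v (-1)) 1 :=
        min_le_min (max_le_max huv le_rfl) le_rfl
      exact add_le_add (mul_le_mul_of_nonneg_left hcc aa_nonneg)
        (mul_le_mul_of_nonneg_left (cube_mono hcc) bb_nonneg)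
    exact this.monotoneOn _

instance : Nonempty ↥Xset := ⟨⟨f0, f0_mem⟩⟩

noncomputable instance : CompleteSpace ↥Xset := isClosed_Xset.completeSpace_coe

noncomputable def Kc : ↥Xset → ↥Xset := fun f => ⟨Kfun f.1 f.2, Kfun_mem f.1 f.2⟩

noncomputable def Kconst : NNReal := ⟨gl - 1, le_of_lt gl_pos⟩

lemma Kc_contracting : ContractingWith Kconst Kc := by
  constructor
  · show Kconst < 1
    rw [← NNReal.coe_lt_coe, NNReal.coe_one]
    show gl - 1 < (1:ℝ)
    linarith [gl_lt]
  · apply LipschitzWith.of_dist_le_mul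
    intro f g
    rw [Subtype.dist_eq]
    show dist (Kfun f.1 f.2) (Kfun g.1 g.2) ≤ (gl - 1) * dist f g
    rw [show dist f g = dist f.1 g.1 from rfl]
    refine (BoundedContinuousFunction.dist_le
      (mul_nonneg (le_of_lt gl_pos) dist_nonneg)).2 fun x => ?_
    have key : ∀ (t c : ℝ), dist ((gl - 1) * f.1 t + c) ((gl - 1) * g.1 t + c) ≤
        (gl - 1) * dist f.1 g.1 := by
      intro t c
      rw [Real.dist_eq]
      have e : (gl - 1) * f.1 t + c - ((gl - 1) * g.1 t + c) = (gl - 1) * (f.1 t - g.1 t) := by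
        ring
      rw [e, abs_mul, abs_of_pos gl_pos]
      refine mul_le_mul_of_nonneg_left ?_ (le_of_lt gl_pos)
      rw [← Real.dist_eq]
      exact BoundedContinuousFunction.dist_coe_le_dist t
    show dist (Kraw ⇑f.1 x) (Kraw ⇑g.1 x) ≤ (gl - 1) * dist f.1 g.1
    unfold Kraw brA brB brC brD
    split_ifs
    · simpa [sub_eq_add_neg] using key _ (-(2 - gl))
    · simpa [sub_eq_add_neg] using key _ (-(gl - 1))
    · exact key _ (gl - 1)
    · exact key _ (2 - gl)

noncomputable def psiX : ↥Xset := ContractingWith.fixedPoint Kc Kc_contracting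

noncomputable def psi : ℝ → ℝ := ⇑(psiX.1)

lemma psi_fixed (x : ℝ) : psi x = Kraw psi x := by
  have h : Kc psiX = psiX := Kc_contracting.fixedPoint_isFixedPt
  have h2 : psiX.1 = (Kc psiX).1 := by rw [h]
  show psiX.1 x = Kraw (⇑psiX.1) x
  conv_lhs => rw [h2]
  rfl

lemma psi_val1 : psi (-1) = -1 := psiX.2.1
lemma psi_val2 : psi (-1/2) = gl - 2 := psiX.2.2.1
lemma psi_val3 : psi 0 = 0 := psiX.2.2.2.1
lemma psi_val4 : psi (1/2) = 2 - gl := psiX.2.2.2.2.1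
lemma psi_val5 : psi 1 = 1 := psiX.2.2.2.2.2.1
lemma psi_mono : MonotoneOn psi (Icc (-1) 1) := psiX.2.2.2.2.2.2
lemma psi_cont : Continuous psi := psiX.1.continuous

end construction6

section Elemmas

lemma psi_E1 {x : ℝ} (h1 : -1 ≤ x) (h2 : x ≤ -1/2) :
    psi (-2 - 1/x) = gl * psi x + (gl - 1) := by
  have hfix := psi_fixed x
  rw [Kraw, if_pos h2] at hfix
  unfold brA at hfix
  rw [max_eq_left h1, min_eq_left h2] at hfix
  refine mul_left_cancel₀ (ne_of_gt gl_pos) ?_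
  linear_combination (-1 : ℝ) * hfix - (psi x + 1) * gl_sq

lemma psi_E2 {x : ℝ} (h1 : -1/2 ≤ x) (h2 : x ≤ 0) :
    psi (x + 1) = gl * psi x + 1 := by
  rcases eq_or_lt_of_le h1 with he | hlt
  · rw [← he, show (-1/2:ℝ) + 1 = 1/2 by norm_num, psi_val4, psi_val2]
    linear_combination -gl_sq
  · have hfix := psi_fixed x
    rw [Kraw, if_neg (not_le.2 hlt), if_pos h2] at hfix
    unfold brB at hfix
    rw [max_eq_left (le_of_lt hlt), min_eq_left h2] at hfix
    refine mul_left_cancel₀ (ne_of_gt gl_pos) ?_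
    linear_combination (-1 : ℝ) * hfix - psi x * gl_sq

lemma psi_E3 {x : ℝ} (h1 : 0 ≤ x) (h2 : x ≤ 1/2) :
    psi (x - 1) = gl * psi x - 1 := by
  rcases eq_or_lt_of_le h1 with he | hlt
  · rw [← he, show (0:ℝ) - 1 = -1 by norm_num, psi_val1, psi_val3]
    ring
  · have hfix := psi_fixed x
    rw [Kraw, if_neg (by intro h; linarith : ¬ x ≤ -1/2), if_neg (not_le.2 hlt),
      if_pos h2] at hfix
    unfold brC at hfix
    rw [max_eq_left (le_of_lt hlt), min_eq_left h2] at hfix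
    refine mul_left_cancel₀ (ne_of_gt gl_pos) ?_
    linear_combination (-1 : ℝ) * hfix - psi x * gl_sq

lemma psi_E4 {x : ℝ} (h1 : 1/2 ≤ x) (h2 : x ≤ 1) :
    psi (2 - 1/x) = gl * psi x + (1 - gl) := by
  rcases eq_or_lt_of_le h1 with he | hlt
  · rw [← he, show (2:ℝ) - 1/(1/2) = 0 by norm_num, psi_val3, psi_val4]
    linear_combination gl_sq
  · have hfix := psi_fixed x
    rw [Kraw, if_neg (by intro h; linarith : ¬ x ≤ -1/2),
      if_neg (by intro h; linarith : ¬ x ≤ 0), if_neg (not_le.2 hlt)] at hfix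
    unfold brD at hfix
    rw [max_eq_left (le_of_lt hlt), min_eq_left h2] at hfix
    refine mul_left_cancel₀ (ne_of_gt gl_pos) ?_
    linear_combination (-1 : ℝ) * hfix + (1 - psi x) * gl_sq

end Elemmas

section flats

-- no value 1 before the right endpoint
lemma flat_top {u : ℝ} (h1 : -1 ≤ u) (h2 : u < 1) (h3 : psi u = 1) : False := by
  have sandwich : ∀ w, 0 ≤ w → w < 1 → psi w = 1 → w ≤ 1/2 → False := by
    intro w hw0 hw1 hw3 hw2
    have ha := psi_mono (⟨by linarith, by linarith⟩ : w ∈ Icc (-1:ℝ) 1)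
      (⟨by norm_num, by norm_num⟩ : (1/2:ℝ) ∈ Icc (-1:ℝ) 1) hw2
    rw [hw3, psi_val4] at ha
    linarith [gl_gt]
  have key : ∀ n : ℕ, ∀ w, 1/2 ≤ w → w < 1 → psi w = 1 →
      ∃ u', 0 ≤ u' ∧ u' < 1 ∧ psi u' = 1 ∧ (u' < 1/2 ∨ u' ≤ w - n * (1-w)^2) := by
    intro n
    induction n with
    | zero =>
      intro w hw1 hw2 hw3
      exact ⟨w, by linarith, hw2, hw3, Or.inr (by push_cast; linarith)⟩
    | succ n ih =>
      intro w hw1 hw2 hw3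
      obtain ⟨u', hu0, hu1, hu3, hu4⟩ := ih w hw1 hw2 hw3
      rcases hu4 with h | h
      · exact ⟨u', hu0, hu1, hu3, Or.inl h⟩
      · by_cases hc : u' < 1/2
        · exact ⟨u', hu0, hu1, hu3, Or.inl hc⟩
        · push_neg at hc
          have hu'pos : (0:ℝ) < u' := by linarith
          have hval : psi (2 - 1/u') = 1 := by
            rw [psi_E4 hc (le_of_lt hu1), hu3]; ring
          have hb1 : 0 ≤ 2 - 1/u' := (TmapD_mem hc (le_of_lt hu1)).1
          have hb2 : 2 - 1/u' < 1 := by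
            have : 1 < 1/u' := by rw [lt_div_iff₀ hu'pos]; linarith
            linarith
          have hdec : u' - (2 - 1/u') = (1-u')^2 * (1/u') := by
            field_simp; ring
          have h1u : 1 ≤ 1/u' := by rw [le_div_iff₀ hu'pos]; linarith
          have hn0 : (0:ℝ) ≤ (n:ℝ) * (1-w)^2 :=
            mul_nonneg (Nat.cast_nonneg n) (sq_nonneg _)
          have hu'w : u' ≤ w := by linarith
          have hsq : (1-w)^2 ≤ (1-u')^2 :=
            pow_le_pow_left₀ (by linarith) (by linarith) 2
          refine ⟨2 - 1/u', hb1, hb2, hval, Or.inr ?_⟩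
          push_cast
          nlinarith [mul_le_mul_of_nonneg_left h1u (sq_nonneg (1-u'))]
  rcases lt_or_ge u (1/2) with hc | hc
  · rcases lt_or_ge u 0 with hneg | hnn
    · -- u < 0 : then psi 0 between psi u = 1 and psi 1 = 1
      have ha := psi_mono (⟨h1, by linarith⟩ : u ∈ Icc (-1:ℝ) 1)
        (⟨by norm_num, by norm_num⟩ : (0:ℝ) ∈ Icc (-1:ℝ) 1) (le_of_lt hneg)
      have hb := psi_mono (⟨by norm_num, by norm_num⟩ : (0:ℝ) ∈ Icc (-1:ℝ) 1)
        (⟨by norm_num, by norm_num⟩ : (1:ℝ) ∈ Icc (-1:ℝ) 1) (by norm_num)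
      rw [h3, psi_val3, psi_val5] at *
      linarith
    · exact sandwich u hnn h2 h3 (le_of_lt hc)
  · obtain ⟨n, hn⟩ := exists_nat_gt ((u - 1/2)/(1-u)^2)
    have hsq : (0:ℝ) < (1-u)^2 := pow_pos (by linarith) 2
    have hn2 : u - n * (1-u)^2 < 1/2 := by
      rw [div_lt_iff₀ hsq] at hn
      linarith
    obtain ⟨u', hu0, hu1, hu3, hu4⟩ := key n u hc h2 h3
    rcases hu4 with h | h
    · exact sandwich u' hu0 hu1 hu3 (le_of_lt h)
    · exact sandwich u' hu0 hu1 hu3 (by linarith)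

-- no value -1 after the left endpoint
lemma flat_bot {v : ℝ} (h1 : -1 < v) (h2 : v ≤ 1) (h3 : psi v = -1) : False := by
  have sandwich : ∀ w, -1 < w → w ≤ 0 → psi w = -1 → -1/2 ≤ w → False := by
    intro w hw0 hw1 hw3 hw2
    have ha := psi_mono (⟨by norm_num, by norm_num⟩ : (-1/2:ℝ) ∈ Icc (-1:ℝ) 1)
      (⟨by linarith, by linarith⟩ : w ∈ Icc (-1:ℝ) 1) hw2
    rw [hw3, psi_val2] at ha
    linarith [gl_gt]
  have key : ∀ n : ℕ, ∀ w, -1 < w → w ≤ -1/2 → psi w = -1 →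
      ∃ u', -1 < u' ∧ u' ≤ 0 ∧ psi u' = -1 ∧ (-1/2 < u' ∨ w + n * (w+1)^2 ≤ u') := by
    intro n
    induction n with
    | zero =>
      intro w hw1 hw2 hw3
      exact ⟨w, hw1, by linarith, hw3, Or.inr (by push_cast; linarith)⟩
    | succ n ih =>
      intro w hw1 hw2 hw3
      obtain ⟨u', hu0, hu1, hu3, hu4⟩ := ih w hw1 hw2 hw3
      rcases hu4 with h | h
      · exact ⟨u', hu0, hu1, hu3, Or.inl h⟩
      · by_cases hc : -1/2 < u'
        · exact ⟨u', hu0, hu1, hu3, Or.inl hc⟩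
        · push_neg at hc
          have hu'neg : u' < 0 := by linarith
          have hval : psi (-2 - 1/u') = -1 := by
            rw [psi_E1 (le_of_lt hu0) hc, hu3]; ring
          have hb1 := TmapA_mem (le_of_lt hu0) hc
          have hu'0 : u' ≠ 0 := ne_of_lt hu'neg
          have hprod : ((-2 - 1/u') - u') * (-u') = (u'+1)^2 := by
            field_simp; ring
          have hstep : (u'+1)^2 ≤ (-2 - 1/u') - u' := by
            nlinarith [hprod, sq_nonneg (u'+1), show (0:ℝ) < -u' by linarith]
          have hb1' : -1 < -2 - 1/u' := by
            nlinarith [hstep,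
              mul_pos (show (0:ℝ) < u'+1 by linarith) (show (0:ℝ) < u'+2 by linarith)]
          have hn0 : (0:ℝ) ≤ (n:ℝ) * (w+1)^2 :=
            mul_nonneg (Nat.cast_nonneg n) (sq_nonneg _)
          have hwu' : w ≤ u' := by linarith
          have hsq : (w+1)^2 ≤ (u'+1)^2 :=
            pow_le_pow_left₀ (by linarith) (by linarith) 2
          refine ⟨-2 - 1/u', hb1', hb1.2, hval, Or.inr ?_⟩
          push_cast
          linarith [hstep, hsq, hn0]
  rcases lt_or_ge (-1/2) v with hc | hc
  · rcases lt_or_ge 0 v with hpos | hnp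
    · have ha := psi_mono (⟨by norm_num, by norm_num⟩ : (0:ℝ) ∈ Icc (-1:ℝ) 1)
        (⟨by linarith, h2⟩ : v ∈ Icc (-1:ℝ) 1) (le_of_lt hpos)
      have hb := psi_mono (⟨by norm_num, by norm_num⟩ : (-1:ℝ) ∈ Icc (-1:ℝ) 1)
        (⟨by norm_num, by norm_num⟩ : (0:ℝ) ∈ Icc (-1:ℝ) 1) (by norm_num)
      rw [h3, psi_val3, psi_val1] at *
      linarith
    · exact sandwich v h1 hnp h3 (le_of_lt hc)
  · obtain ⟨n, hn⟩ := exists_nat_gt ((-1/2 - v)/(v+1)^2)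
    have hsq : (0:ℝ) < (v+1)^2 := pow_pos (by linarith) 2
    have hn2 : -1/2 < v + n * (v+1)^2 := by
      rw [div_lt_iff₀ hsq] at hn
      linarith
    obtain ⟨u', hu0, hu1, hu3, hu4⟩ := key n v h1 hc h3
    rcases hu4 with h | h
    · exact sandwich u' hu0 hu1 hu3 (le_of_lt h)
    · exact sandwich u' hu0 hu1 hu3 (by linarith)

end flats

section flats2

-- no value 0 left of 0
lemma flat_zero_left {u : ℝ} (h1 : -1 ≤ u) (h2 : u < 0) (h3 : psi u = 0) : False := by
  rcases lt_or_ge u (-1/2) with hc | hc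
  · -- then psi (-1/2) = 0, contradiction with gl - 2 < 0... need monotone sandwich
    have ha := psi_mono (⟨h1, by linarith⟩ : u ∈ Icc (-1:ℝ) 1)
      (⟨by norm_num, by norm_num⟩ : (-1/2:ℝ) ∈ Icc (-1:ℝ) 1) (le_of_lt hc)
    have hb := psi_mono (⟨by norm_num, by norm_num⟩ : (-1/2:ℝ) ∈ Icc (-1:ℝ) 1)
      (⟨by norm_num, by norm_num⟩ : (0:ℝ) ∈ Icc (-1:ℝ) 1) (by norm_num)
    rw [h3] at ha
    rw [psi_val2] at ha hb
    rw [psi_val3] at hb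
    linarith [gl_lt]
  · have := psi_E2 hc (le_of_lt h2)
    rw [h3] at this
    have h4 : psi (u + 1) = 1 := by rw [this]; ring
    exact flat_top (by linarith) (by linarith) h4

-- no value 0 right of 0
lemma flat_zero_right {v : ℝ} (h1 : 0 < v) (h2 : v ≤ 1) (h3 : psi v = 0) : False := by
  rcases le_or_gt v (1/2) with hc | hc
  · have := psi_E3 (le_of_lt h1) hc
    rw [h3] at this
    have h4 : psi (v - 1) = -1 := by rw [this]; ring
    exact flat_bot (by linarith) (by linarith) h4
  · have ha := psi_mono (⟨by norm_num, by norm_num⟩ : (1/2:ℝ) ∈ Icc (-1:ℝ) 1)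
      (⟨by linarith, h2⟩ : v ∈ Icc (-1:ℝ) 1) (le_of_lt hc)
    have hb := psi_mono (⟨by norm_num, by norm_num⟩ : (0:ℝ) ∈ Icc (-1:ℝ) 1)
      (⟨by norm_num, by norm_num⟩ : (1/2:ℝ) ∈ Icc (-1:ℝ) 1) (by norm_num)
    rw [h3] at ha
    rw [psi_val4] at ha hb
    rw [psi_val3] at hb
    linarith [gl_lt]

-- no value gl - 2 left of -1/2
lemma flat_half_left {u : ℝ} (h1 : -1 ≤ u) (h2 : u < -1/2) (h3 : psi u = gl - 2) : False := by
  have := psi_E1 h1 (le_of_lt h2)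
  rw [h3] at this
  have h4 : psi (-2 - 1/u) = 0 := by rw [this]; linear_combination gl_sq
  have hu0 : u < 0 := by linarith
  have hb := TmapA_mem h1 (le_of_lt h2)
  have hlt : -2 - 1/u < 0 := by
    have : -2 < 1/u := by rw [lt_div_iff_of_neg hu0]; linarith
    linarith
  exact flat_zero_left hb.1 hlt h4

-- no value 2 - gl right of 1/2
lemma flat_half_right {v : ℝ} (h1 : 1/2 < v) (h2 : v ≤ 1) (h3 : psi v = 2 - gl) : False := by
  have := psi_E4 (le_of_lt h1) h2
  rw [h3] at this
  have h4 : psi (2 - 1/v) = 0 := by rw [this]; linear_combination -gl_sq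
  have hv0 : (0:ℝ) < v := by linarith
  have hb := TmapD_mem (le_of_lt h1) h2
  have hgt : 0 < 2 - 1/v := by
    have : 1/v < 2 := by rw [div_lt_iff₀ hv0]; linarith
    linarith
  exact flat_zero_right hgt hb.2 h4

-- no value gl - 2 right of -1/2
lemma flat_mhalf_right {v : ℝ} (h1 : -1/2 < v) (h2 : v ≤ 0) (h3 : psi v = gl - 2) : False := by
  have := psi_E2 (le_of_lt h1) h2
  rw [h3] at this
  have h4 : psi (v + 1) = 2 - gl := by rw [this]; linear_combination gl_sq
  exact flat_half_right (by linarith) (by linarith) h4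

-- no value 2 - gl left of 1/2
lemma flat_phalf_left {u : ℝ} (h1 : 0 ≤ u) (h2 : u < 1/2) (h3 : psi u = 2 - gl) : False := by
  have := psi_E3 h1 (le_of_lt h2)
  rw [h3] at this
  have h4 : psi (u - 1) = gl - 2 := by rw [this]; linear_combination -gl_sq
  exact flat_half_left (by linarith) (by linarith) h4

end flats2

section strict

lemma expandA {m1 m2 : ℝ} (h1 : -1 < m1) (h2 : m1 < m2) (h3 : m2 < -1/2)
    (he : psi m1 = psi m2) :
    ∃ q1 q2 : ℝ, q1 ∈ Icc (-1:ℝ) 1 ∧ q2 ∈ Icc (-1:ℝ) 1 ∧ psi q1 = psi q2 ∧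
      m2 - m1 < q2 - q1 := by
  have hm1 : m1 < 0 := by linarith
  have hm2 : m2 < 0 := by linarith
  have hb1 := TmapA_mem (le_of_lt h1) (by linarith : m1 ≤ -1/2)
  have hb2 := TmapA_mem (by linarith : -1 ≤ m2) (le_of_lt h3)
  refine ⟨-2 - 1/m1, -2 - 1/m2, ⟨hb1.1, by linarith [hb1.2]⟩, ⟨hb2.1, by linarith [hb2.2]⟩,
    ?_, ?_⟩
  · rw [psi_E1 (le_of_lt h1) (by linarith : m1 ≤ -1/2),
      psi_E1 (by linarith : -1 ≤ m2) (le_of_lt h3), he]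
  · have hm0 : m1 ≠ 0 := ne_of_lt hm1
    have hm0' : m2 ≠ 0 := ne_of_lt hm2
    have hprod : 0 < m1 * m2 := mul_pos_of_neg_of_neg hm1 hm2
    have hlt1 : m1 * m2 < 1 := by nlinarith
    have e : (-2 - 1/m2) - (-2 - 1/m1) = (m2 - m1) * (1/(m1*m2)) := by
      field_simp
      ring
    have hd : 1 < 1/(m1*m2) := by rw [lt_div_iff₀ hprod]; linarith
    have := mul_lt_mul_of_pos_left hd (by linarith : (0:ℝ) < m2 - m1)
    rw [e]
    linarith [this]

lemma expandD {m1 m2 : ℝ} (h1 : 1/2 < m1) (h2 : m1 < m2) (h3 : m2 < 1)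
    (he : psi m1 = psi m2) :
    ∃ q1 q2 : ℝ, q1 ∈ Icc (-1:ℝ) 1 ∧ q2 ∈ Icc (-1:ℝ) 1 ∧ psi q1 = psi q2 ∧
      m2 - m1 < q2 - q1 := by
  have hm1 : (0:ℝ) < m1 := by linarith
  have hm2 : (0:ℝ) < m2 := by linarith
  have hb1 := TmapD_mem (le_of_lt h1) (by linarith : m1 ≤ 1)
  have hb2 := TmapD_mem (by linarith : 1/2 ≤ m2) (le_of_lt h3)
  refine ⟨2 - 1/m1, 2 - 1/m2, ⟨by linarith [hb1.1], hb1.2⟩, ⟨by linarith [hb2.1], hb2.2⟩,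
    ?_, ?_⟩
  · rw [psi_E4 (le_of_lt h1) (by linarith : m1 ≤ 1),
      psi_E4 (by linarith : 1/2 ≤ m2) (le_of_lt h3), he]
  · have hm0 : m1 ≠ 0 := ne_of_gt hm1
    have hm0' : m2 ≠ 0 := ne_of_gt hm2
    have hprod : 0 < m1 * m2 := mul_pos hm1 hm2
    have hlt1 : m1 * m2 < 1 := by nlinarith
    have e : (2 - 1/m2) - (2 - 1/m1) = (m2 - m1) * (1/(m1*m2)) := by
      field_simp
      ring
    have hd : 1 < 1/(m1*m2) := by rw [lt_div_iff₀ hprod]; linarith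
    have := mul_lt_mul_of_pos_left hd (by linarith : (0:ℝ) < m2 - m1)
    rw [e]
    linarith [this]

end strict

section strict2

lemma psi_strictMono : StrictMonoOn psi (Icc (-1) 1) := by
  intro a ha b hb hab
  by_contra hcon
  have heq : psi a = psi b := le_antisymm (psi_mono ha hb hab.le) (not_lt.1 hcon)
  -- the set of "flat pairs"
  set S : Set (ℝ × ℝ) :=
    {p | p.1 ∈ Icc (-1:ℝ) 1 ∧ p.2 ∈ Icc (-1:ℝ) 1 ∧ psi p.1 = psi p.2} with hSdef
  have hSclosed : IsClosed S := by
    refine (isClosed_Icc.preimage continuous_fst).inter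
      ((isClosed_Icc.preimage continuous_snd).inter ?_)
    exact isClosed_eq (psi_cont.comp continuous_fst) (psi_cont.comp continuous_snd)
  have hScomp : IsCompact S :=
    (isCompact_Icc.prod isCompact_Icc).of_isClosed_subset hSclosed
      (fun p hp => ⟨hp.1, hp.2.1⟩)
  have hSne : S.Nonempty := ⟨(a, b), ha, hb, heq⟩
  obtain ⟨p, hpS, hpmax⟩ := hScomp.exists_isMaxOn hSne
    ((continuous_snd.sub continuous_fst).continuousOn)
  obtain ⟨hp1, hp2, hpe⟩ := hpS
  have hgrow : ∀ q ∈ S, q.2 - q.1 ≤ p.2 - p.1 := fun q hq => hpmax hq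
  have hstart : b - a ≤ p.2 - p.1 := hgrow (a, b) ⟨ha, hb, heq⟩
  have hm : p.1 < p.2 := by linarith
  -- sandwich
  have hsand : ∀ t, p.1 ≤ t → t ≤ p.2 → psi t = psi p.1 := by
    intro t h1 h2
    refine le_antisymm ?_ (psi_mono hp1 ⟨le_trans hp1.1 h1, le_trans h2 hp2.2⟩ h1)
    rw [hpe]
    exact psi_mono ⟨le_trans hp1.1 h1, le_trans h2 hp2.2⟩ hp2 h2
  -- endpoints are not hit
  have hA1 : -1 < p.1 := by
    rcases eq_or_lt_of_le hp1.1 with h | h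
    · exfalso
      refine flat_bot (v := p.2) (by rw [← h] at hm; exact hm) hp2.2 ?_
      rw [← hpe, ← h, psi_val1]
    · exact h
  have hB1 : p.2 < 1 := by
    rcases eq_or_lt_of_le hp2.2 with h | h
    · exfalso
      refine flat_top (u := p.1) hp1.1 (by rw [h] at hm; exact hm) ?_
      rw [hpe, h, psi_val5]
    · exact h
  -- case analysis on position
  rcases lt_or_ge p.1 (-1/2) with hc1 | hc1
  · rcases lt_or_ge p.2 (-1/2) with hc2 | hc2
    · -- both in (-1, -1/2)
      obtain ⟨q1, q2, hq1, hq2, hqe, hql⟩ := expandA hA1 hm hc2 hpe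
      exact absurd (hgrow (q1, q2) ⟨hq1, hq2, hqe⟩) (by simp; linarith)
    · -- p.1 < -1/2 ≤ p.2 : value is gl - 2
      have hv : psi p.1 = gl - 2 := by
        rw [← psi_val2]
        exact (hsand (-1/2) (le_of_lt hc1) hc2).symm
      exact flat_half_left hp1.1 hc1 hv
  · rcases eq_or_lt_of_le hc1 with he1 | hg1
    · -- p.1 = -1/2
      have hv : psi p.2 = gl - 2 := by rw [← hpe, ← he1, psi_val2]
      rcases le_or_gt p.2 0 with hd | hd
      · exact flat_mhalf_right (by rw [← he1] at hm; exact hm) hd hv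
      · have h0 : psi 0 = gl - 2 := by
          rw [show psi 0 = psi p.1 from hsand 0 (by rw [← he1]; norm_num) (le_of_lt hd),
            ← he1, psi_val2]
        rw [psi_val3] at h0
        linarith [gl_lt, h0]
    · rcases lt_or_ge p.1 0 with hc3 | hc3
      · rcases lt_or_ge p.2 0 with hc4 | hc4
        · -- both in (-1/2, 0) : shift up then expand in D
          have e1 := psi_E2 (le_of_lt hg1) (le_of_lt hc3)
          have e2 := psi_E2 (le_of_lt (lt_trans hg1 hm)) (le_of_lt hc4)
          have he' : psi (p.1 + 1) = psi (p.2 + 1) := by rw [e1, e2, hpe]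
          obtain ⟨q1, q2, hq1, hq2, hqe, hql⟩ :=
            expandD (by linarith) (by linarith) (by linarith) he'
          refine absurd (hgrow (q1, q2) ⟨hq1, hq2, hqe⟩) (by simp; linarith)
        · -- p.1 < 0 ≤ p.2 : value 0
          have hv : psi p.1 = 0 := by
            rw [← psi_val3]
            exact (hsand 0 (le_of_lt hc3) hc4).symm
          exact flat_zero_left hp1.1 hc3 hv
      · rcases eq_or_lt_of_le hc3 with he2 | hg2
        · -- p.1 = 0
          have hv : psi p.2 = 0 := by rw [← hpe, ← he2, psi_val3]
          exact flat_zero_right (by rw [← he2] at hm; exact hm) hp2.2 hv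
        · rcases lt_or_ge p.1 (1/2) with hc5 | hc5
          · rcases lt_or_ge p.2 (1/2) with hc6 | hc6
            · -- both in (0, 1/2) : shift down then expand in A
              have e1 := psi_E3 (le_of_lt hg2) (le_of_lt hc5)
              have e2 := psi_E3 (le_of_lt (lt_trans hg2 hm)) (le_of_lt hc6)
              have he' : psi (p.1 - 1) = psi (p.2 - 1) := by rw [e1, e2, hpe]
              obtain ⟨q1, q2, hq1, hq2, hqe, hql⟩ :=
                expandA (by linarith) (by linarith) (by linarith) he'
              refine absurd (hgrow (q1, q2) ⟨hq1, hq2, hqe⟩) (by simp; linarith)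
            · -- p.1 < 1/2 ≤ p.2 : value 2 - gl
              have hv : psi p.1 = 2 - gl := by
                rw [← psi_val4]
                exact (hsand (1/2) (le_of_lt hc5) hc6).symm
              exact flat_phalf_left (le_of_lt hg2) hc5 hv
          · rcases eq_or_lt_of_le hc5 with he3 | hg3
            · -- p.1 = 1/2
              have hv : psi p.2 = 2 - gl := by rw [← hpe, ← he3, psi_val4]
              exact flat_half_right (by rw [← he3] at hm; exact hm) hp2.2 hv
            · -- both in (1/2, 1)
              obtain ⟨q1, q2, hq1, hq2, hqe, hql⟩ := expandD hg3 hm hB1 hpe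
              exact absurd (hgrow (q1, q2) ⟨hq1, hq2, hqe⟩) (by simp; linarith)

end strict2


section chains

-- condition (i) on the overlap piece (-1/2, -1/3)
lemma chain_i {x : ℝ} (hxa : -1/2 < x) (hxb : x < -1/3) :
    psi ((1 + 2*x) / (2 + 3*x)) = gl * psi x + (gl - 1) := by
  have hd1 : (0:ℝ) < 1 + x := by linarith
  have hd2 : (0:ℝ) < 2 + 3*x := by linarith
  have hd1' : (1:ℝ) + x ≠ 0 := ne_of_gt hd1
  have hd1'' : (x:ℝ) + 1 ≠ 0 := by intro h; rw [add_comm] at h; exact hd1' h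
  have hd2' : (2:ℝ) + 3*x ≠ 0 := ne_of_gt hd2
  have h2 := psi_E2 (le_of_lt hxa) (by linarith : x ≤ 0)
  have h4 := psi_E4 (by linarith : 1/2 ≤ x + 1) (by linarith : x + 1 ≤ 1)
  have e1 : 2 - 1/(x+1) = (1 + 2*x)/(1 + x) := by field_simp; ring
  rw [e1, h2] at h4
  have hu1 : (0:ℝ) ≤ (1 + 2*x)/(1 + x) := div_nonneg (by linarith) hd1.le
  have hu2 : (1 + 2*x)/(1 + x) ≤ 1/2 := by rw [div_le_iff₀ hd1]; linarith
  have h3a := psi_E3 hu1 hu2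
  have e2 : (1 + 2*x)/(1 + x) - 1 = x/(1 + x) := by field_simp; ring
  rw [e2, h4] at h3a
  have hw1 : -1 ≤ -(1 + x)/(2 + 3*x) := by rw [le_div_iff₀ hd2]; linarith
  have hw2 : -(1 + x)/(2 + 3*x) ≤ -1/2 := by rw [div_le_iff₀ hd2]; linarith
  have h1 := psi_E1 hw1 hw2
  have hne : -(1 + x)/(2 + 3*x) ≠ 0 :=
    ne_of_lt (div_neg_of_neg_of_pos (by linarith) hd2)
  have hne3 : (-1 - x : ℝ) ≠ 0 := by intro h; apply hd1'; linarith
  have e3 : -2 - 1/(-(1 + x)/(2 + 3*x)) = x/(1 + x) := by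
    rw [one_div_div]
    rw [show (-(1+x) : ℝ) = -1 - x by ring]
    field_simp
    ring
  rw [e3] at h1
  have hW : psi (-(1 + x)/(2 + 3*x)) = gl^2 * psi x :=
    mul_left_cancel₀ gl_ne (by linear_combination h3a - h1)
  have hz1 : (0:ℝ) ≤ (1 + 2*x)/(2 + 3*x) := div_nonneg (by linarith) hd2.le
  have hz2 : (1 + 2*x)/(2 + 3*x) ≤ 1/2 := by rw [div_le_iff₀ hd2]; linarith
  have h3b := psi_E3 hz1 hz2
  have e4 : (1 + 2*x)/(2 + 3*x) - 1 = -(1 + x)/(2 + 3*x) := by rw [div_sub_one hd2']; ring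
  rw [e4, hW] at h3b
  exact mul_left_cancel₀ gl_ne (by linear_combination -h3b - gl_sq)

-- condition (iv) on the overlap piece [1/3, 1/2]
lemma chain_iv {x : ℝ} (hxa : 1/3 ≤ x) (hxb : x ≤ 1/2) :
    psi ((2*x - 1) / (2 - 3*x)) = gl * psi x + (1 - gl) := by
  have hd1 : (0:ℝ) < 1 - x := by linarith
  have hd2 : (0:ℝ) < 2 - 3*x := by linarith
  have hd1' : (1:ℝ) - x ≠ 0 := ne_of_gt hd1
  have hd1'' : (x:ℝ) - 1 ≠ 0 := by intro h; apply hd1'; linarith [sub_eq_zero.1 h]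
  have hd2' : (2:ℝ) - 3*x ≠ 0 := ne_of_gt hd2
  have h3 := psi_E3 (by linarith : (0:ℝ) ≤ x) hxb
  have h1 := psi_E1 (by linarith : -1 ≤ x - 1) (by linarith : x - 1 ≤ -1/2)
  have f1 : -2 - 1/(x - 1) = (2*x - 1)/(1 - x) := by field_simp; ring
  rw [f1, h3] at h1
  have hA2a : -1/2 ≤ (2*x - 1)/(1 - x) := by rw [le_div_iff₀ hd1]; linarith
  have hA2b : (2*x - 1)/(1 - x) ≤ 0 := by rw [div_le_iff₀ hd1]; linarith
  have h2 := psi_E2 hA2a hA2b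
  have f2 : (2*x - 1)/(1 - x) + 1 = x/(1 - x) := by field_simp; ring
  rw [f2, h1] at h2
  have hv1 : 1/2 ≤ (1 - x)/(2 - 3*x) := by rw [le_div_iff₀ hd2]; linarith
  have hv2 : (1 - x)/(2 - 3*x) ≤ 1 := by rw [div_le_iff₀ hd2]; linarith
  have h4 := psi_E4 hv1 hv2
  have hne : (1 - x)/(2 - 3*x) ≠ 0 := ne_of_gt (div_pos hd1 hd2)
  have f3 : 2 - 1/((1 - x)/(2 - 3*x)) = x/(1 - x) := by
    rw [one_div_div]
    field_simp
    ring
  rw [f3, h2] at h4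
  have hA4 : psi ((1 - x)/(2 - 3*x)) = gl^2 * psi x :=
    mul_left_cancel₀ gl_ne (by linear_combination -h4)
  have hz1 : -1/2 ≤ (2*x - 1)/(2 - 3*x) := by rw [le_div_iff₀ hd2]; linarith
  have hz2 : (2*x - 1)/(2 - 3*x) ≤ 0 := by rw [div_le_iff₀ hd2]; linarith
  have h2b := psi_E2 hz1 hz2
  have f4 : (2*x - 1)/(2 - 3*x) + 1 = (1 - x)/(2 - 3*x) := by rw [div_add_one hd2']; ring
  rw [f4, hA4] at h2b
  exact mul_left_cancel₀ gl_ne (by linear_combination -h2b + gl_sq)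

end chains

/-- There is an increasing homeomorphism `ψ` of `[-1,1]` fixing `±1` such that, with
`λ = (1+√5)/2`: `ψ ∘ T̃ ∘ ψ⁻¹ (x) = λx + (λ-1)` on `ψ([-1,-1/3))`,
`ψ ∘ S̃ ∘ ψ⁻¹ (x) = λx + 1` on `ψ([-1/2,0))`, `ψ ∘ S̃ ∘ ψ⁻¹ (x) = λx - 1` on `ψ((0,1/2))`,
and `ψ ∘ T̃⁻¹ ∘ ψ⁻¹ (x) = λx + (1-λ)` on `ψ([1/3,1))`. (Each condition
"`ψ(f(ψ⁻¹ y)) = λy + c` for all `y ∈ ψ(I)`" is expressed equivalently as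
`∀ x ∈ I, ψ (f x) = λ * ψ x + c`.) -/
theorem exists_conjugacy_linearizing_generators :
    ∃ ψ : ℝ → ℝ,
      ContinuousOn ψ (Set.Icc (-1) 1) ∧ StrictMonoOn ψ (Set.Icc (-1) 1) ∧
      ψ (-1) = -1 ∧ ψ 1 = 1 ∧
      (∀ x ∈ Set.Ico (-1 : ℝ) (-1/3),
        ψ (Ttilde x) = (1 + Real.sqrt 5) / 2 * ψ x + ((1 + Real.sqrt 5) / 2 - 1)) ∧
      (∀ x ∈ Set.Ico (-1/2 : ℝ) 0,
        ψ (Stilde x) = (1 + Real.sqrt 5) / 2 * ψ x + 1) ∧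
      (∀ x ∈ Set.Ioo (0 : ℝ) (1/2),
        ψ (Stilde x) = (1 + Real.sqrt 5) / 2 * ψ x - 1) ∧
      (∀ x ∈ Set.Ico (1/3 : ℝ) 1,
        ψ (Tinvtilde x) = (1 + Real.sqrt 5) / 2 * ψ x + (1 - (1 + Real.sqrt 5) / 2)) := by
  refine ⟨psi, psi_cont.continuousOn, psi_strictMono, psi_val1, psi_val5, ?_, ?_, ?_, ?_⟩
  · -- (i)
    rintro x ⟨hx1, hx2⟩
    rcases le_or_gt x (-1/2) with hc | hc
    · rw [Ttilde, if_pos hc]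
      exact psi_E1 hx1 hc
    · rw [Ttilde, if_neg (not_le.2 hc), if_pos (by linarith : x ≤ 0)]
      exact chain_i hc hx2
  · -- (ii)
    rintro x ⟨hx1, hx2⟩
    rw [Stilde, if_pos hx2]
    exact psi_E2 hx1 hx2.le
  · -- (iii)
    rintro x ⟨hx1, hx2⟩
    rw [Stilde, if_neg (not_lt.2 hx1.le), if_neg (ne_of_gt hx1)]
    exact psi_E3 hx1.le hx2.le
  · -- (iv)
    rintro x ⟨hx1, hx2⟩
    rcases le_or_gt x (1/2) with hc | hc
    · rw [Tinvtilde, if_neg (by intro h; linarith : ¬ x ≤ 0), if_pos hc]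
      have e0 : (1 - 2*x)/(3*x - 2) = (2*x - 1)/(2 - 3*x) := by
        have h1 : (3*x - 2 : ℝ) ≠ 0 := by intro h; nlinarith [hc]
        have h2 : (2 - 3*x : ℝ) ≠ 0 := by intro h; nlinarith [hc]
        rw [div_eq_div_iff h1 h2]
        ring
      rw [e0]
      exact chain_iv hx1 hc
    · rw [Tinvtilde, if_neg (by intro h; linarith : ¬ x ≤ 0), if_neg (not_le.2 hc)]
      exact psi_E4 hc.le hx2.le
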